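/- Let α, γ > 0. In the Lie algebra g^J₁(ℝ) = span_ℝ{F,G,H,P,Q,R} of 4×4 real matrices, set e₁ = √α(F+G), e₂ = 2√α H, e₄ = (1/√γ)P, e₅ = (1/√γ)Q, and let m = span_ℝ{e₁,e₂,e₄,e₅}, h = span_ℝ{F−G, R}. Then g^J₁(ℝ) = m ⊕ h, [h,m] ⊆ m (so the Siegel–Jacobi upper half-plane X₁^J = G^J₁(ℝ)/(SO(2)×ℝ) is reductive), but [m,m] ⊄ h, and there exist X, Y, Z ∈ m such that B([Z,X]_m, Y) + B(X, [Z,Y]_m) ≠ 0, where B is the inner product on m making (e₁,e₂,e₄,e₅) orthonormal and W_m denotes the m-component of W in the decomposition g^J₁(ℝ) = m ⊕ h. Consequently X₁^J with the balanced metric is a reductive, non-symmetric space that is not naturally reductive with respect to this decomposition. -/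

import Mathlib

open Matrix

/-- Generator `F` of the Jacobi Lie algebra `g^J₁(ℝ) ⊆ M(4,ℝ)`. -/
noncomputable def Fj : Matrix (Fin 4) (Fin 4) ℝ :=
  !![0,0,1,0; 0,0,0,0; 0,0,0,0; 0,0,0,0]

/-- Generator `G`. -/
noncomputable def Gj : Matrix (Fin 4) (Fin 4) ℝ :=
  !![0,0,0,0; 0,0,0,0; 1,0,0,0; 0,0,0,0]

/-- Generator `H`. -/
noncomputable def Hj : Matrix (Fin 4) (Fin 4) ℝ :=
  !![1,0,0,0; 0,0,0,0; 0,0,-1,0; 0,0,0,0]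

/-- Generator `P`. -/
noncomputable def Pj : Matrix (Fin 4) (Fin 4) ℝ :=
  !![0,0,0,0; 1,0,0,0; 0,0,0,-1; 0,0,0,0]

/-- Generator `Q`. -/
noncomputable def Qj : Matrix (Fin 4) (Fin 4) ℝ :=
  !![0,0,0,1; 0,0,1,0; 0,0,0,0; 0,0,0,0]

/-- Generator `R`. -/
noncomputable def Rj : Matrix (Fin 4) (Fin 4) ℝ :=
  !![0,0,0,0; 0,0,0,1; 0,0,0,0; 0,0,0,0]

/-- The orthonormal basis `(e₁, e₂, e₄, e₅)` of `m`:
`e₁ = √α(F+G)`, `e₂ = 2√α·H`, `e₄ = (1/√γ)P`, `e₅ = (1/√γ)Q`. -/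
noncomputable def Ebasis (α γ : ℝ) : Fin 4 → Matrix (Fin 4) (Fin 4) ℝ :=
  ![Real.sqrt α • (Fj + Gj), (2 * Real.sqrt α) • Hj,
    (Real.sqrt γ)⁻¹ • Pj, (Real.sqrt γ)⁻¹ • Qj]

/-- The subspace `m = span{e₁,e₂,e₄,e₅}`. -/
noncomputable def mSub (α γ : ℝ) : Submodule ℝ (Matrix (Fin 4) (Fin 4) ℝ) :=
  Submodule.span ℝ (Set.range (Ebasis α γ))

/-- The subspace `h = span{F−G, R}`. -/
noncomputable def hSub : Submodule ℝ (Matrix (Fin 4) (Fin 4) ℝ) :=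
  Submodule.span ℝ {Fj - Gj, Rj}

/-! ### Auxiliary commutator identities -/

private lemma comm_smul (c : ℝ) (X Y : Matrix (Fin 4) (Fin 4) ℝ) :
    X * (c • Y) - (c • Y) * X = c • (X * Y - Y * X) := by
  rw [mul_smul_comm, smul_mul_assoc, smul_sub]

private lemma smul_comm_smul (c d : ℝ) (X Y : Matrix (Fin 4) (Fin 4) ℝ) :
    (c • X) * (d • Y) - (d • Y) * (c • X) = (c * d) • (X * Y - Y * X) := by
  rw [smul_mul_assoc, mul_smul_comm, smul_mul_assoc, mul_smul_comm, smul_smul, smul_smul,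
    mul_comm d c, ← smul_sub]

private lemma b1 : (Fj - Gj) * (Fj + Gj) - (Fj + Gj) * (Fj - Gj) = (2 : ℝ) • Hj := by
  ext i j
  fin_cases i <;> fin_cases j <;>
    simp [Fj, Gj, Hj, Matrix.mul_apply, Fin.sum_univ_four, Matrix.vecHead, Matrix.vecTail] <;>
    norm_num

private lemma b2 : (Fj - Gj) * Hj - Hj * (Fj - Gj) = (-2 : ℝ) • (Fj + Gj) := by
  ext i j
  fin_cases i <;> fin_cases j <;>
    simp [Fj, Gj, Hj, Matrix.mul_apply, Fin.sum_univ_four, Matrix.vecHead, Matrix.vecTail] <;>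
    norm_num

private lemma b3 : (Fj - Gj) * Pj - Pj * (Fj - Gj) = (-1 : ℝ) • Qj := by
  ext i j
  fin_cases i <;> fin_cases j <;>
    simp [Fj, Gj, Pj, Qj, Matrix.mul_apply, Fin.sum_univ_four, Matrix.vecHead, Matrix.vecTail] <;>
    norm_num

private lemma b4 : (Fj - Gj) * Qj - Qj * (Fj - Gj) = Pj := by
  ext i j
  fin_cases i <;> fin_cases j <;>
    simp [Fj, Gj, Pj, Qj, Matrix.mul_apply, Fin.sum_univ_four, Matrix.vecHead, Matrix.vecTail] <;>
    norm_num

private lemma b5 : Rj * (Fj + Gj) - (Fj + Gj) * Rj = 0 := by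
  ext i j
  fin_cases i <;> fin_cases j <;>
    simp [Fj, Gj, Rj, Matrix.mul_apply, Fin.sum_univ_four, Matrix.vecHead, Matrix.vecTail]

private lemma b6 : Rj * Hj - Hj * Rj = 0 := by
  ext i j
  fin_cases i <;> fin_cases j <;>
    simp [Hj, Rj, Matrix.mul_apply, Fin.sum_univ_four, Matrix.vecHead, Matrix.vecTail]

private lemma b7 : Rj * Pj - Pj * Rj = 0 := by
  ext i j
  fin_cases i <;> fin_cases j <;>
    simp [Pj, Rj, Matrix.mul_apply, Fin.sum_univ_four, Matrix.vecHead, Matrix.vecTail]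

private lemma b8 : Rj * Qj - Qj * Rj = 0 := by
  ext i j
  fin_cases i <;> fin_cases j <;>
    simp [Qj, Rj, Matrix.mul_apply, Fin.sum_univ_four, Matrix.vecHead, Matrix.vecTail]

private lemma b9 : (Fj + Gj) * Pj - Pj * (Fj + Gj) = (-1 : ℝ) • Qj := by
  ext i j
  fin_cases i <;> fin_cases j <;>
    simp [Fj, Gj, Pj, Qj, Matrix.mul_apply, Fin.sum_univ_four, Matrix.vecHead, Matrix.vecTail] <;>
    norm_num

private lemma b10 : Hj * Pj - Pj * Hj = (-1 : ℝ) • Pj := by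
  ext i j
  fin_cases i <;> fin_cases j <;>
    simp [Hj, Pj, Matrix.mul_apply, Fin.sum_univ_four, Matrix.vecHead, Matrix.vecTail] <;>
    norm_num

private lemma commFG_E0 (α γ : ℝ) :
    (Fj - Gj) * Ebasis α γ 0 - Ebasis α γ 0 * (Fj - Gj) = Ebasis α γ 1 := by
  show (Fj - Gj) * (Real.sqrt α • (Fj + Gj)) - (Real.sqrt α • (Fj + Gj)) * (Fj - Gj) =
    (2 * Real.sqrt α) • Hj
  rw [comm_smul, b1, smul_smul, mul_comm]

private lemma commFG_E1 (α γ : ℝ) :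
    (Fj - Gj) * Ebasis α γ 1 - Ebasis α γ 1 * (Fj - Gj) = (-4 : ℝ) • Ebasis α γ 0 := by
  show (Fj - Gj) * ((2 * Real.sqrt α) • Hj) - ((2 * Real.sqrt α) • Hj) * (Fj - Gj) =
    (-4 : ℝ) • (Real.sqrt α • (Fj + Gj))
  rw [comm_smul, b2, smul_smul, smul_smul]
  congr 1
  ring

private lemma commFG_E2 (α γ : ℝ) :
    (Fj - Gj) * Ebasis α γ 2 - Ebasis α γ 2 * (Fj - Gj) = (-1 : ℝ) • Ebasis α γ 3 := by
  show (Fj - Gj) * ((Real.sqrt γ)⁻¹ • Pj) - ((Real.sqrt γ)⁻¹ • Pj) * (Fj - Gj) =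
    (-1 : ℝ) • ((Real.sqrt γ)⁻¹ • Qj)
  rw [comm_smul, b3, smul_smul, smul_smul]
  congr 1
  ring

private lemma commFG_E3 (α γ : ℝ) :
    (Fj - Gj) * Ebasis α γ 3 - Ebasis α γ 3 * (Fj - Gj) = Ebasis α γ 2 := by
  show (Fj - Gj) * ((Real.sqrt γ)⁻¹ • Qj) - ((Real.sqrt γ)⁻¹ • Qj) * (Fj - Gj) =
    (Real.sqrt γ)⁻¹ • Pj
  rw [comm_smul, b4]

private lemma commR_E (α γ : ℝ) (i : Fin 4) :
    Rj * Ebasis α γ i - Ebasis α γ i * Rj = 0 := by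
  fin_cases i
  · show Rj * (Real.sqrt α • (Fj + Gj)) - (Real.sqrt α • (Fj + Gj)) * Rj = 0
    rw [comm_smul, b5, smul_zero]
  · show Rj * ((2 * Real.sqrt α) • Hj) - ((2 * Real.sqrt α) • Hj) * Rj = 0
    rw [comm_smul, b6, smul_zero]
  · show Rj * ((Real.sqrt γ)⁻¹ • Pj) - ((Real.sqrt γ)⁻¹ • Pj) * Rj = 0
    rw [comm_smul, b7, smul_zero]
  · show Rj * ((Real.sqrt γ)⁻¹ • Qj) - ((Real.sqrt γ)⁻¹ • Qj) * Rj = 0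
    rw [comm_smul, b8, smul_zero]

private lemma commE0_E2 (α γ : ℝ) :
    Ebasis α γ 0 * Ebasis α γ 2 - Ebasis α γ 2 * Ebasis α γ 0 =
      (-(Real.sqrt α * (Real.sqrt γ)⁻¹)) • Qj := by
  show (Real.sqrt α • (Fj + Gj)) * ((Real.sqrt γ)⁻¹ • Pj) -
      ((Real.sqrt γ)⁻¹ • Pj) * (Real.sqrt α • (Fj + Gj)) =
    (-(Real.sqrt α * (Real.sqrt γ)⁻¹)) • Qj
  rw [smul_comm_smul, b9, smul_smul]
  congr 1
  ring

private lemma commE1_E2 (α γ : ℝ) :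
    Ebasis α γ 1 * Ebasis α γ 2 - Ebasis α γ 2 * Ebasis α γ 1 =
      (-(2 * Real.sqrt α)) • Ebasis α γ 2 := by
  show ((2 * Real.sqrt α) • Hj) * ((Real.sqrt γ)⁻¹ • Pj) -
      ((Real.sqrt γ)⁻¹ • Pj) * ((2 * Real.sqrt α) • Hj) =
    (-(2 * Real.sqrt α)) • ((Real.sqrt γ)⁻¹ • Pj)
  rw [smul_comm_smul, b10, smul_smul, smul_smul]
  congr 1
  ring
private lemma aux_comm (M : Submodule ℝ (Matrix (Fin 4) (Fin 4) ℝ))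
    (s t : Set (Matrix (Fin 4) (Fin 4) ℝ))
    (h : ∀ x ∈ s, ∀ y ∈ t, x * y - y * x ∈ M) :
    ∀ A ∈ Submodule.span ℝ s, ∀ B ∈ Submodule.span ℝ t, A * B - B * A ∈ M := by
  intro A hA
  induction hA using Submodule.span_induction with
  | mem x hx =>
      intro B hB
      induction hB using Submodule.span_induction with
      | mem y hy => exact h x hx y hy
      | zero => simpa using M.zero_mem
      | add y z hy hz iy iz =>
          have e : x * (y + z) - (y + z) * x = (x * y - y * x) + (x * z - z * x) := by
            noncomm_ring
          rw [e]; exact M.add_mem iy iz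
      | smul a y hy iy =>
          have e : x * (a • y) - (a • y) * x = a • (x * y - y * x) := by
            rw [mul_smul_comm, smul_mul_assoc, smul_sub]
          rw [e]; exact M.smul_mem a iy
  | zero => intro B hB; simpa using M.zero_mem
  | add y z hy hz iy iz =>
      intro B hB
      have e : (y + z) * B - B * (y + z) = (y * B - B * y) + (z * B - B * z) := by
        noncomm_ring
      rw [e]; exact M.add_mem (iy B hB) (iz B hB)
  | smul a y hy iy =>
      intro B hB
      have e : (a • y) * B - B * (a • y) = a • (y * B - B * y) := by
        rw [smul_mul_assoc, mul_smul_comm, smul_sub]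
      rw [e]; exact M.smul_mem a (iy B hB)

/-- The Siegel–Jacobi upper half-plane `X₁^J = G^J₁(ℝ)/(SO(2)×ℝ)` with the balanced
metric is reductive and non-symmetric, but not naturally reductive:
`g^J₁(ℝ) = m ⊕ h`, `[h,m] ⊆ m`, `[m,m] ⊄ h`, and there exist `X, Y, Z ∈ m`
(written in the orthonormal basis `e₁,e₂,e₄,e₅` of `m`, with the brackets `[Z,X]`,
`[Z,Y]` decomposed along `g^J₁(ℝ) = m ⊕ h`) such that
`B([Z,X]_m, Y) + B(X, [Z,Y]_m) ≠ 0`, where `B` makes `(e₁,e₂,e₄,e₅)`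
orthonormal. -/
theorem siegel_jacobi_not_naturally_reductive (α γ : ℝ)
    (hα : 0 < α) (hγ : 0 < γ) :
    (mSub α γ ⊔ hSub =
      Submodule.span ℝ ({Fj, Gj, Hj, Pj, Qj, Rj} : Set (Matrix (Fin 4) (Fin 4) ℝ))) ∧
    (mSub α γ ⊓ hSub = ⊥) ∧
    (∀ A ∈ hSub, ∀ B ∈ mSub α γ, A * B - B * A ∈ mSub α γ) ∧
    ¬ (∀ A ∈ mSub α γ, ∀ B ∈ mSub α γ, A * B - B * A ∈ hSub) ∧
    (∃ x y z cZX cZY : Fin 4 → ℝ, ∃ dZX dZY : Fin 2 → ℝ,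
      ((∑ i, z i • Ebasis α γ i) * (∑ i, x i • Ebasis α γ i) -
          (∑ i, x i • Ebasis α γ i) * (∑ i, z i • Ebasis α γ i) =
        (∑ i, cZX i • Ebasis α γ i) + dZX 0 • (Fj - Gj) + dZX 1 • Rj) ∧
      ((∑ i, z i • Ebasis α γ i) * (∑ i, y i • Ebasis α γ i) -
          (∑ i, y i • Ebasis α γ i) * (∑ i, z i • Ebasis α γ i) =
        (∑ i, cZY i • Ebasis α γ i) + dZY 0 • (Fj - Gj) + dZY 1 • Rj) ∧
      (∑ i, (cZX i * y i + x i * cZY i)) ≠ 0) := by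
  set s := Real.sqrt α with hs_def
  set t := Real.sqrt γ with ht_def
  have hs : 0 < s := Real.sqrt_pos.mpr hα
  have ht : 0 < t := Real.sqrt_pos.mpr hγ
  have hs0 : s ≠ 0 := ne_of_gt hs
  have ht0 : t ≠ 0 := ne_of_gt ht
  have hE : ∀ i, Ebasis α γ i ∈ mSub α γ := fun i => Submodule.subset_span ⟨i, rfl⟩
  have hFG : Fj - Gj ∈ hSub := Submodule.subset_span (by left; rfl)
  have hR : Rj ∈ hSub := Submodule.subset_span (by right; rfl)
  refine ⟨?_, ?_, ?_, ?_, ?_⟩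
  · -- sup = span of six generators
    apply le_antisymm
    · rw [sup_le_iff]
      constructor
      · apply Submodule.span_le.mpr
        rintro _ ⟨i, rfl⟩
        have h6 : ∀ X ∈ ({Fj, Gj, Hj, Pj, Qj, Rj} : Set (Matrix (Fin 4) (Fin 4) ℝ)),
            X ∈ Submodule.span ℝ ({Fj, Gj, Hj, Pj, Qj, Rj} : Set (Matrix (Fin 4) (Fin 4) ℝ)) :=
          fun X hX => Submodule.subset_span hX
        fin_cases i <;> simp only [Ebasis, Matrix.cons_val_zero, Matrix.cons_val_one,
          Matrix.head_cons, Fin.mk_one, Matrix.cons_val_fin_one, Fin.isValue,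
          Matrix.cons_val_two, Matrix.tail_cons, Matrix.cons_val_three]
        · exact Submodule.smul_mem _ _ (Submodule.add_mem _ (h6 Fj (by simp)) (h6 Gj (by simp)))
        · exact Submodule.smul_mem _ _ (h6 Hj (by simp))
        · exact Submodule.smul_mem _ _ (h6 Pj (by simp))
        · exact Submodule.smul_mem _ _ (h6 Qj (by simp))
      · apply Submodule.span_le.mpr
        rintro x hx
        rcases hx with rfl | rfl
        · exact Submodule.sub_mem _ (Submodule.subset_span (by simp))
            (Submodule.subset_span (by simp))
        · exact Submodule.subset_span (by simp)
    · apply Submodule.span_le.mpr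
      intro x hx
      have memm : ∀ i, Ebasis α γ i ∈ mSub α γ ⊔ hSub := fun i => Submodule.mem_sup_left (hE i)
      have memh : ∀ y ∈ hSub, y ∈ mSub α γ ⊔ hSub := fun y hy => Submodule.mem_sup_right hy
      rcases hx with rfl | rfl | rfl | rfl | rfl | rfl
      · -- Fj
        have e : Fj = (2 * s)⁻¹ • Ebasis α γ 0 + (2 * s)⁻¹ • (s • (Fj - Gj)) := by
          show Fj = (2 * s)⁻¹ • (s • (Fj + Gj)) + (2 * s)⁻¹ • (s • (Fj - Gj))
          rw [smul_smul, smul_smul, show (2 * s)⁻¹ * s = 2⁻¹ by field_simp]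
          module
        rw [e]
        exact Submodule.add_mem _ (Submodule.smul_mem _ _ (memm 0))
          (Submodule.smul_mem _ _ (memh _ (Submodule.smul_mem _ _ hFG)))
      · -- Gj
        have e : Gj = (2 * s)⁻¹ • Ebasis α γ 0 - (2 * s)⁻¹ • (s • (Fj - Gj)) := by
          show Gj = (2 * s)⁻¹ • (s • (Fj + Gj)) - (2 * s)⁻¹ • (s • (Fj - Gj))
          rw [smul_smul, smul_smul, show (2 * s)⁻¹ * s = 2⁻¹ by field_simp]
          module
        rw [e]
        exact Submodule.sub_mem _ (Submodule.smul_mem _ _ (memm 0))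
          (Submodule.smul_mem _ _ (memh _ (Submodule.smul_mem _ _ hFG)))
      · -- Hj
        have e : Hj = (2 * s)⁻¹ • Ebasis α γ 1 := by
          show Hj = (2 * s)⁻¹ • ((2 * s) • Hj)
          rw [smul_smul, inv_mul_cancel₀ (by positivity), one_smul]
        rw [e]
        exact Submodule.smul_mem _ _ (memm 1)
      · -- Pj
        have e : Pj = t • Ebasis α γ 2 := by
          show Pj = t • (t⁻¹ • Pj)
          rw [smul_smul, mul_inv_cancel₀ ht0, one_smul]
        rw [e]
        exact Submodule.smul_mem _ _ (memm 2)
      · -- Qj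
        have e : Qj = t • Ebasis α γ 3 := by
          show Qj = t • (t⁻¹ • Qj)
          rw [smul_smul, mul_inv_cancel₀ ht0, one_smul]
        rw [e]
        exact Submodule.smul_mem _ _ (memm 3)
      · exact memh _ hR
  · -- inf = ⊥
    rw [eq_bot_iff]
    intro x hx
    obtain ⟨hm, hh⟩ := Submodule.mem_inf.mp hx
    rw [mSub, Submodule.mem_span_range_iff_exists_fun] at hm
    obtain ⟨c, hc⟩ := hm
    rw [hSub, Submodule.mem_span_pair] at hh
    obtain ⟨a, b, hab⟩ := hh
    have key : ∑ i, c i • Ebasis α γ i = a • (Fj - Gj) + b • Rj := hc.trans hab.symm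
    have h02 := congrFun (congrFun key 0) 2
    have h20 := congrFun (congrFun key 2) 0
    have h13 := congrFun (congrFun key 1) 3
    simp [Ebasis, Fj, Gj, Hj, Pj, Qj, Rj, Fin.sum_univ_four, Matrix.vecHead,
      Matrix.vecTail] at h02 h20 h13
    have ha : a = 0 := by linarith [h02, h20]
    have hb : b = 0 := h13.symm
    have hx0 : x = 0 := by rw [← hab, ha, hb]; simp
    simp [hx0]
  · -- [h, m] ⊆ m
    intro A hA B hB
    refine aux_comm (mSub α γ) {Fj - Gj, Rj} (Set.range (Ebasis α γ)) ?_ A hA B hB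
    rintro x hx _ ⟨i, rfl⟩
    rcases hx with rfl | rfl
    · fin_cases i
      · rw [show ((⟨0, by omega⟩ : Fin 4)) = (0 : Fin 4) from rfl, commFG_E0]; exact hE 1
      · rw [show ((⟨1, by omega⟩ : Fin 4)) = (1 : Fin 4) from rfl, commFG_E1]
        exact Submodule.smul_mem _ _ (hE 0)
      · rw [show ((⟨2, by omega⟩ : Fin 4)) = (2 : Fin 4) from rfl, commFG_E2]
        exact Submodule.smul_mem _ _ (hE 3)
      · rw [show ((⟨3, by omega⟩ : Fin 4)) = (3 : Fin 4) from rfl, commFG_E3]; exact hE 2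
    · rw [commR_E]; exact Submodule.zero_mem _
  · -- not [m, m] ⊆ h
    intro hcl
    have hmem := hcl (Ebasis α γ 0) (hE 0) (Ebasis α γ 2) (hE 2)
    rw [commE0_E2] at hmem
    rw [hSub, Submodule.mem_span_pair] at hmem
    obtain ⟨a, b, hab⟩ := hmem
    have h12 := congrFun (congrFun hab 1) 2
    simp [Ebasis, Fj, Gj, Hj, Pj, Qj, Rj, Matrix.vecHead, Matrix.vecTail] at h12
    rcases h12 with h | h
    · exact hs0 h
    · exact ht0 h
  · -- not naturally reductive witness
    refine ⟨![0, 0, 1, 0], ![0, 0, 1, 0], ![0, 1, 0, 0],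
      ![0, 0, -(2 * s), 0], ![0, 0, -(2 * s), 0], ![0, 0], ![0, 0], ?_, ?_, ?_⟩
    · have h1 : (∑ i, (![0, 0, 1, 0] : Fin 4 → ℝ) i • Ebasis α γ i) = Ebasis α γ 2 := by
        simp [Fin.sum_univ_four]
      have h2 : (∑ i, (![0, 1, 0, 0] : Fin 4 → ℝ) i • Ebasis α γ i) = Ebasis α γ 1 := by
        simp [Fin.sum_univ_four]
      have h3 : (∑ i, (![0, 0, -(2 * s), 0] : Fin 4 → ℝ) i • Ebasis α γ i)
          = (-(2 * s)) • Ebasis α γ 2 := by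
        simp [Fin.sum_univ_four]
      rw [h1, h2, h3]
      simp [commE1_E2 α γ]
      rfl
    · have h1 : (∑ i, (![0, 0, 1, 0] : Fin 4 → ℝ) i • Ebasis α γ i) = Ebasis α γ 2 := by
        simp [Fin.sum_univ_four]
      have h2 : (∑ i, (![0, 1, 0, 0] : Fin 4 → ℝ) i • Ebasis α γ i) = Ebasis α γ 1 := by
        simp [Fin.sum_univ_four]
      have h3 : (∑ i, (![0, 0, -(2 * s), 0] : Fin 4 → ℝ) i • Ebasis α γ i)
          = (-(2 * s)) • Ebasis α γ 2 := by
        simp [Fin.sum_univ_four]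
      rw [h1, h2, h3]
      simp [commE1_E2 α γ]
      rfl
    · simp [Fin.sum_univ_four]
      positivity
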